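/- For every real t > 0 and every j = 1,…,n, the operators d(t) and U_{jj} on P_n ⊗ Λ commute: d(t) ∘ U_{jj} = U_{jj} ∘ d(t). Consequently, for every γ ∈ ℤ^n and 0 ≤ p ≤ 2n, d(t) maps V^{p,n,γ} into V^{p+1,n,γ}. -/

import Mathlib

open scoped TensorProduct

noncomputable section

namespace HeisenbergModel

variable (n : ℕ)

/-- Algebraic model of anti-Fock space: the polynomial algebra `ℂ[x_1,…,x_n]`. -/
abbrev P := MvPolynomial (Fin n) ℂ

/-- The `(2n+1)`-dimensional coefficient space with distinguished basis
`τ^1,…,τ^n, τ^{1̄},…,τ^{n̄}, τ^w`. -/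
abbrev Vc := Fin (2 * n + 1) → ℂ

/-- The exterior algebra `Λ = ⋀ V`. -/
abbrev Lam := ExteriorAlgebra ℂ (Vc n)

/-- The space `P_n ⊗ Λ` on which all operators act. -/
abbrev PL := P n ⊗[ℂ] Lam n

/-- Index of the basis vector `τ^j`. -/
def idx1 (j : Fin n) : Fin (2 * n + 1) := ⟨j.1, by omega⟩

/-- Index of the basis vector `τ^{j̄}`. -/
def idx2 (j : Fin n) : Fin (2 * n + 1) := ⟨n + j.1, by omega⟩

/-- Index of the basis vector `τ^w`. -/
def idxw : Fin (2 * n + 1) := ⟨2 * n, by omega⟩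

/-- The distinguished basis vectors of `V`. -/
def tau (i : Fin (2 * n + 1)) : Vc n := Pi.single i 1

/-- The dual-basis functionals on `V`. -/
def dualf (i : Fin (2 * n + 1)) : Module.Dual ℂ (Vc n) := LinearMap.proj i

/-- Annihilation operator `a_j = ∂/∂x_j` on `P_n`. -/
def aOp (j : Fin n) : P n →ₗ[ℂ] P n := (MvPolynomial.pderiv j).toLinearMap

/-- Creation operator `a_j^* = (multiplication by x_j)` on `P_n`. -/
def aStarOp (j : Fin n) : P n →ₗ[ℂ] P n := LinearMap.mulLeft ℂ (MvPolynomial.X j)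

/-- Left exterior multiplication `e(v)` on `Λ`. -/
def eMulV (v : Vc n) : Lam n →ₗ[ℂ] Lam n := LinearMap.mulLeft ℂ (ExteriorAlgebra.ι ℂ v)

/-- Interior multiplication (left contraction) by a dual functional on `Λ`. -/
def iMulF (f : Module.Dual ℂ (Vc n)) : Lam n →ₗ[ℂ] Lam n :=
  CliffordAlgebra.contractLeft (Q := (0 : QuadraticForm ℂ (Vc n))) f

/-- Lift an operator on `P_n` to `P_n ⊗ Λ` (acting on the first factor). -/
def onP (f : P n →ₗ[ℂ] P n) : PL n →ₗ[ℂ] PL n := LinearMap.rTensor (Lam n) f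

/-- Lift an operator on `Λ` to `P_n ⊗ Λ` (acting on the second factor). -/
def onL (f : Lam n →ₗ[ℂ] Lam n) : PL n →ₗ[ℂ] PL n := LinearMap.lTensor (P n) f

/-- `a_j` acting on `P_n ⊗ Λ`. -/
def A (j : Fin n) : PL n →ₗ[ℂ] PL n := onP n (aOp n j)

/-- `a_j^*` acting on `P_n ⊗ Λ`. -/
def Astar (j : Fin n) : PL n →ₗ[ℂ] PL n := onP n (aStarOp n j)

/-- `e(τ^j)` acting on `P_n ⊗ Λ`. -/
def E1 (j : Fin n) : PL n →ₗ[ℂ] PL n := onL n (eMulV n (tau n (idx1 n j)))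

/-- `e(τ^{j̄})` acting on `P_n ⊗ Λ`. -/
def E2 (j : Fin n) : PL n →ₗ[ℂ] PL n := onL n (eMulV n (tau n (idx2 n j)))

/-- `e(τ^w)` acting on `P_n ⊗ Λ`. -/
def Ew : PL n →ₗ[ℂ] PL n := onL n (eMulV n (tau n (idxw n)))

/-- `i(Z_j)` acting on `P_n ⊗ Λ`. -/
def I1 (j : Fin n) : PL n →ₗ[ℂ] PL n := onL n (iMulF n (dualf n (idx1 n j)))

/-- `i(Z_{j̄})` acting on `P_n ⊗ Λ`. -/
def I2 (j : Fin n) : PL n →ₗ[ℂ] PL n := onL n (iMulF n (dualf n (idx2 n j)))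

/-- `i(W)` acting on `P_n ⊗ Λ`. -/
def Iw : PL n →ₗ[ℂ] PL n := onL n (iMulF n (dualf n (idxw n)))

/-- `θ_j(t) = −√(−1)·√t·(e(τ^j) a_j^* + e(τ^{j̄}) a_j) − √(−1)·e(τ^j) e(τ^{j̄}) i(W)`. -/
def theta (t : ℝ) (j : Fin n) : PL n →ₗ[ℂ] PL n :=
  (-(Complex.I * (Real.sqrt t : ℝ))) • (E1 n j ∘ₗ Astar n j + E2 n j ∘ₗ A n j)
    - Complex.I • (E1 n j ∘ₗ E2 n j ∘ₗ Iw n)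

/-- `θ_j^†(t) = √(−1)·√t·(i(Z_j) a_j + i(Z_{j̄}) a_j^*) + √(−1)·e(τ^w) i(Z_{j̄}) i(Z_j)`. -/
def thetaDag (t : ℝ) (j : Fin n) : PL n →ₗ[ℂ] PL n :=
  (Complex.I * (Real.sqrt t : ℝ)) • (I1 n j ∘ₗ A n j + I2 n j ∘ₗ Astar n j)
    + Complex.I • (Ew n ∘ₗ I2 n j ∘ₗ I1 n j)

/-- `d(t) = Σ_j θ_j(t) − √(−1)·t·e(τ^w)`. -/
def dOp (t : ℝ) : PL n →ₗ[ℂ] PL n :=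
  (∑ j : Fin n, theta n t j) - (Complex.I * (t : ℝ)) • Ew n

/-- `U_{jj} = a_j^* a_j − e(τ^j) i(Z_j) + e(τ^{j̄}) i(Z_{j̄})`. -/
def Udiag (j : Fin n) : PL n →ₗ[ℂ] PL n :=
  Astar n j ∘ₗ A n j - E1 n j ∘ₗ I1 n j + E2 n j ∘ₗ I2 n j

/-- The `(i,j)` transposition operator `U_{ij} = a_i^* a_j − e(τ^j) i(Z_i) + e(τ^{ī}) i(Z_{j̄})`. -/
def Uoff (i j : Fin n) : PL n →ₗ[ℂ] PL n :=
  Astar n i ∘ₗ A n j - E1 n j ∘ₗ I1 n i + E2 n i ∘ₗ I2 n j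

/-- The degree-`p` component `Λ^p` of the exterior algebra, as a submodule. -/
def LamP (p : ℕ) : Submodule ℂ (Lam n) :=
  LinearMap.range (ExteriorAlgebra.ι ℂ : Vc n →ₗ[ℂ] Lam n) ^ p

/-- The subspace `P_n ⊗ Λ^p` of `P_n ⊗ Λ`. -/
def Wp (p : ℕ) : Submodule ℂ (PL n) :=
  LinearMap.range (TensorProduct.map (LinearMap.id : P n →ₗ[ℂ] P n) (LamP n p).subtype)

/-- The simultaneous eigenspace `V^{p,n,γ} = {v ∈ P_n ⊗ Λ^p : U_{jj} v = γ_j v for all j}`. -/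
def Vpγ (p : ℕ) (γ : Fin n → ℤ) : Submodule ℂ (PL n) :=
  Wp n p ⊓ ⨅ j : Fin n, Module.End.eigenspace (Udiag n j) ((γ j : ℂ))



/-! ### Infrastructure -/

section Infra
variable {n : ℕ}

lemma onL_comp (f g : Lam n →ₗ[ℂ] Lam n) : onL n (f ∘ₗ g) = onL n f ∘ₗ onL n g :=
  LinearMap.lTensor_comp _ _ _

lemma onL_mul (f g : Lam n →ₗ[ℂ] Lam n) : onL n (f ∘ₗ g) = onL n f * onL n g :=
  LinearMap.lTensor_comp _ _ _

lemma onP_mul (f g : P n →ₗ[ℂ] P n) : onP n (f ∘ₗ g) = onP n f * onP n g :=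
  LinearMap.rTensor_comp _ _ _

lemma onP_onL (f : P n →ₗ[ℂ] P n) (g : Lam n →ₗ[ℂ] Lam n) :
    onP n f ∘ₗ onL n g = onL n g ∘ₗ onP n f := by
  unfold onP onL
  rw [LinearMap.rTensor_comp_lTensor, LinearMap.lTensor_comp_rTensor]

lemma onP_onL_comm (f : P n →ₗ[ℂ] P n) (g : Lam n →ₗ[ℂ] Lam n) :
    Commute (onP n f) (onL n g) := by
  rw [Commute, SemiconjBy, Module.End.mul_eq_comp, Module.End.mul_eq_comp, onP_onL]

lemma e_mul_e (u v : Vc n) : eMulV n u ∘ₗ eMulV n v = -(eMulV n v ∘ₗ eMulV n u) := by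
  refine LinearMap.ext fun x => ?_
  simp only [LinearMap.comp_apply, eMulV, LinearMap.mulLeft_apply, LinearMap.neg_apply,
    ← mul_assoc]
  rw [eq_neg_of_add_eq_zero_left (ExteriorAlgebra.ι_add_mul_swap u v), neg_mul]

lemma i_mul_e (f : Module.Dual ℂ (Vc n)) (v : Vc n) :
    iMulF n f ∘ₗ eMulV n v = f v • LinearMap.id - eMulV n v ∘ₗ iMulF n f := by
  refine LinearMap.ext fun x => ?_
  simpa [iMulF, eMulV] using CliffordAlgebra.contractLeft_ι_mul f v x

lemma i_mul_i (f g : Module.Dual ℂ (Vc n)) :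
    iMulF n f ∘ₗ iMulF n g = -(iMulF n g ∘ₗ iMulF n f) := by
  refine LinearMap.ext fun x => ?_
  simpa [iMulF] using CliffordAlgebra.contractLeft_comm f g x

end Infra

section Infra2
variable {n : ℕ}

lemma e_sq (v : Vc n) : eMulV n v ∘ₗ eMulV n v = 0 := by
  refine LinearMap.ext fun x => ?_
  simp only [LinearMap.comp_apply, eMulV, LinearMap.mulLeft_apply, ← mul_assoc,
    ExteriorAlgebra.ι_sq_zero, zero_mul, LinearMap.zero_apply]

lemma i_sq (f : Module.Dual ℂ (Vc n)) : iMulF n f ∘ₗ iMulF n f = 0 := by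
  refine LinearMap.ext fun x => ?_
  simpa [iMulF] using CliffordAlgebra.contractLeft_contractLeft f x

/-- Lifted: `E(u) E(v) = - E(v) E(u)`. -/
lemma E_mul_E (u v : Vc n) :
    onL n (eMulV n u) * onL n (eMulV n v) = -(onL n (eMulV n v) * onL n (eMulV n u)) := by
  rw [← onL_mul, ← onL_mul, e_mul_e]
  exact LinearMap.lTensor_neg _

/-- Lifted: `E(v)^2 = 0`. -/
lemma E_sq (v : Vc n) : onL n (eMulV n v) * onL n (eMulV n v) = 0 := by
  rw [← onL_mul, e_sq]; exact LinearMap.lTensor_zero _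

/-- Lifted: `I(f)^2 = 0`. -/
lemma I_sq (f : Module.Dual ℂ (Vc n)) : onL n (iMulF n f) * onL n (iMulF n f) = 0 := by
  rw [← onL_mul, i_sq]; exact LinearMap.lTensor_zero _

/-- Lifted: `I(f) E(v) = f v • 1 - E(v) I(f)`. -/
lemma I_mul_E (f : Module.Dual ℂ (Vc n)) (v : Vc n) :
    onL n (iMulF n f) * onL n (eMulV n v)
      = f v • 1 - onL n (eMulV n v) * onL n (iMulF n f) := by
  rw [← onL_mul, ← onL_mul, i_mul_e]
  unfold onL
  rw [LinearMap.lTensor_sub, LinearMap.lTensor_smul, LinearMap.lTensor_id]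
  rfl

/-- Lifted: `I(f) I(g) = - I(g) I(f)`. -/
lemma I_mul_I (f g : Module.Dual ℂ (Vc n)) :
    onL n (iMulF n f) * onL n (iMulF n g) = -(onL n (iMulF n g) * onL n (iMulF n f)) := by
  rw [← onL_mul, ← onL_mul, i_mul_i]
  exact LinearMap.lTensor_neg _

lemma a_mul_aStar_same (j : Fin n) : A n j * Astar n j = Astar n j * A n j + 1 := by
  have h : aOp n j ∘ₗ aStarOp n j = aStarOp n j ∘ₗ aOp n j + LinearMap.id := by
    refine LinearMap.ext fun q => ?_
    simp [aOp, aStarOp, MvPolynomial.pderiv_mul, MvPolynomial.pderiv_X_self, add_comm]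
  have := congrArg (onP n) h
  rw [onP_mul] at this
  rw [A, Astar, this, ← onP_mul]
  unfold onP
  rw [LinearMap.rTensor_add, LinearMap.rTensor_comp, LinearMap.rTensor_id]
  rfl

lemma a_mul_aStar_ne {j k : Fin n} (h : j ≠ k) : A n j * Astar n k = Astar n k * A n j := by
  have h' : aOp n j ∘ₗ aStarOp n k = aStarOp n k ∘ₗ aOp n j := by
    refine LinearMap.ext fun q => ?_
    simp [aOp, aStarOp, MvPolynomial.pderiv_mul, MvPolynomial.pderiv_X_of_ne h.symm]
  have := congrArg (onP n) h'
  rw [onP_mul, onP_mul] at this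
  exact this

lemma dualf_tau (i i' : Fin (2 * n + 1)) :
    dualf n i (tau n i') = if i = i' then 1 else 0 := by
  simp [dualf, tau, Pi.single_apply]

lemma idx1_ne_idx2 (j k : Fin n) : idx1 n j ≠ idx2 n k := by
  simp only [idx1, idx2, Fin.ne_iff_vne]
  omega

lemma idx1_ne_idxw (j : Fin n) : idx1 n j ≠ idxw n := by
  simp only [idx1, idxw, Fin.ne_iff_vne]
  omega

lemma idx2_ne_idxw (j : Fin n) : idx2 n j ≠ idxw n := by
  simp only [idx2, idxw, Fin.ne_iff_vne]
  omega

lemma idx1_inj {j k : Fin n} (h : idx1 n j = idx1 n k) : j = k := by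
  simpa [idx1, Fin.ext_iff] using h

lemma idx2_inj {j k : Fin n} (h : idx2 n j = idx2 n k) : j = k := by
  simp only [idx2, Fin.ext_iff] at h
  exact Fin.ext (by omega)

end Infra2

section Infra3
variable {n : ℕ}

lemma tri {α : Type*} [Semigroup α] {x y z : α} (h : x * y = z) (w : α) :
    x * (y * w) = z * w := by rw [← mul_assoc, h]

/-- Partial derivatives commute. -/
lemma a_mul_a (j k : Fin n) : A n j * A n k = A n k * A n j := by
  have hcomm : ∀ q : P n, MvPolynomial.pderiv j (MvPolynomial.pderiv k q)
      = MvPolynomial.pderiv k (MvPolynomial.pderiv j q) := by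
    intro q
    induction q using MvPolynomial.induction_on' with
    | monomial s a =>
      rcases eq_or_ne j k with rfl | hjk
      · rfl
      · simp only [MvPolynomial.pderiv_monomial, Finsupp.tsub_apply,
          Finsupp.single_eq_of_ne' hjk, Finsupp.single_eq_of_ne' (Ne.symm hjk), tsub_zero]
        have hidx : s - (fun₀ | k => (1:ℕ)) - (fun₀ | j => 1)
            = s - (fun₀ | j => 1) - (fun₀ | k => 1) := by
          ext i
          simp only [Finsupp.tsub_apply, Finsupp.single_apply]
          omega
        rw [hidx]
        ring_nf
    | add p q hp hq => simp [hp, hq]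
  have h : aOp n j ∘ₗ aOp n k = aOp n k ∘ₗ aOp n j :=
    LinearMap.ext fun q => hcomm q
  have := congrArg (onP n) h
  rw [onP_mul, onP_mul] at this
  exact this

lemma aStar_mul_aStar (j k : Fin n) : Astar n j * Astar n k = Astar n k * Astar n j := by
  have h : aStarOp n j ∘ₗ aStarOp n k = aStarOp n k ∘ₗ aStarOp n j := by
    refine LinearMap.ext fun q => ?_
    simp only [aStarOp, LinearMap.comp_apply, LinearMap.mulLeft_apply, ← mul_assoc,
      mul_comm (MvPolynomial.X j) (MvPolynomial.X k)]
  have := congrArg (onP n) h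
  rw [onP_mul, onP_mul] at this
  exact this

-- cross commutation between P-side and Λ-side atoms
lemma cAE1 (j k : Fin n) : A n j * E1 n k = E1 n k * A n j := (onP_onL_comm _ _).eq
lemma cAE2 (j k : Fin n) : A n j * E2 n k = E2 n k * A n j := (onP_onL_comm _ _).eq
lemma cAEw (j : Fin n) : A n j * Ew n = Ew n * A n j := (onP_onL_comm _ _).eq
lemma cAI1 (j k : Fin n) : A n j * I1 n k = I1 n k * A n j := (onP_onL_comm _ _).eq
lemma cAI2 (j k : Fin n) : A n j * I2 n k = I2 n k * A n j := (onP_onL_comm _ _).eq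
lemma cAIw (j : Fin n) : A n j * Iw n = Iw n * A n j := (onP_onL_comm _ _).eq
lemma cSE1 (j k : Fin n) : Astar n j * E1 n k = E1 n k * Astar n j := (onP_onL_comm _ _).eq
lemma cSE2 (j k : Fin n) : Astar n j * E2 n k = E2 n k * Astar n j := (onP_onL_comm _ _).eq
lemma cSEw (j : Fin n) : Astar n j * Ew n = Ew n * Astar n j := (onP_onL_comm _ _).eq
lemma cSI1 (j k : Fin n) : Astar n j * I1 n k = I1 n k * Astar n j := (onP_onL_comm _ _).eq
lemma cSI2 (j k : Fin n) : Astar n j * I2 n k = I2 n k * Astar n j := (onP_onL_comm _ _).eq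
lemma cSIw (j : Fin n) : Astar n j * Iw n = Iw n * Astar n j := (onP_onL_comm _ _).eq

-- interior/exterior relations with explicit dual values
lemma rI1E1_same (j : Fin n) : I1 n j * E1 n j = 1 - E1 n j * I1 n j := by
  rw [I1, E1, I_mul_E, dualf_tau, if_pos rfl, one_smul]
lemma rI2E2_same (j : Fin n) : I2 n j * E2 n j = 1 - E2 n j * I2 n j := by
  rw [I2, E2, I_mul_E, dualf_tau, if_pos rfl, one_smul]
lemma rI1E1_ne {j k : Fin n} (h : j ≠ k) : I1 n j * E1 n k = -(E1 n k * I1 n j) := by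
  rw [I1, E1, I_mul_E, dualf_tau, if_neg (fun hh => h (idx1_inj hh))]
  rw [zero_smul]
  exact zero_sub (G := Module.End ℂ (PL n)) _
lemma rI2E2_ne {j k : Fin n} (h : j ≠ k) : I2 n j * E2 n k = -(E2 n k * I2 n j) := by
  rw [I2, E2, I_mul_E, dualf_tau, if_neg (fun hh => h (idx2_inj hh))]
  rw [zero_smul]
  exact zero_sub (G := Module.End ℂ (PL n)) _
lemma rI1E2 (j k : Fin n) : I1 n j * E2 n k = -(E2 n k * I1 n j) := by
  rw [I1, E2, I_mul_E, dualf_tau, if_neg (idx1_ne_idx2 j k)]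
  rw [zero_smul]
  exact zero_sub (G := Module.End ℂ (PL n)) _
lemma rI2E1 (j k : Fin n) : I2 n j * E1 n k = -(E1 n k * I2 n j) := by
  rw [I2, E1, I_mul_E, dualf_tau, if_neg (fun hh => idx1_ne_idx2 k j hh.symm)]
  rw [zero_smul]
  exact zero_sub (G := Module.End ℂ (PL n)) _
lemma rI1Ew (j : Fin n) : I1 n j * Ew n = -(Ew n * I1 n j) := by
  rw [I1, Ew, I_mul_E, dualf_tau, if_neg (idx1_ne_idxw j)]
  rw [zero_smul]
  exact zero_sub (G := Module.End ℂ (PL n)) _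
lemma rI2Ew (j : Fin n) : I2 n j * Ew n = -(Ew n * I2 n j) := by
  rw [I2, Ew, I_mul_E, dualf_tau, if_neg (idx2_ne_idxw j)]
  rw [zero_smul]
  exact zero_sub (G := Module.End ℂ (PL n)) _
lemma rIwE1 (j : Fin n) : Iw n * E1 n j = -(E1 n j * Iw n) := by
  rw [Iw, E1, I_mul_E, dualf_tau, if_neg (fun hh => idx1_ne_idxw j hh.symm)]
  rw [zero_smul]
  exact zero_sub (G := Module.End ℂ (PL n)) _
lemma rIwE2 (j : Fin n) : Iw n * E2 n j = -(E2 n j * Iw n) := by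
  rw [Iw, E2, I_mul_E, dualf_tau, if_neg (fun hh => idx2_ne_idxw j hh.symm)]
  rw [zero_smul]
  exact zero_sub (G := Module.End ℂ (PL n)) _

-- anti-commutation among exteriors / interiors
lemma rE2E1 (j k : Fin n) : E2 n j * E1 n k = -(E1 n k * E2 n j) := by
  rw [E2, E1]; exact E_mul_E _ _
lemma rEwE1 (j : Fin n) : Ew n * E1 n j = -(E1 n j * Ew n) := by
  rw [Ew, E1]; exact E_mul_E _ _
lemma rEwE2 (j : Fin n) : Ew n * E2 n j = -(E2 n j * Ew n) := by
  rw [Ew, E2]; exact E_mul_E _ _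
lemma rE1E1 (j : Fin n) : E1 n j * E1 n j = 0 := by rw [E1]; exact E_sq _
lemma rE2E2 (j : Fin n) : E2 n j * E2 n j = 0 := by rw [E2]; exact E_sq _
lemma rI1Iw (j : Fin n) : I1 n j * Iw n = -(Iw n * I1 n j) := by
  rw [I1, Iw]; exact I_mul_I _ _
lemma rI2Iw (j : Fin n) : I2 n j * Iw n = -(Iw n * I2 n j) := by
  rw [I2, Iw]; exact I_mul_I _ _
lemma rI2I1 (j k : Fin n) : I2 n j * I1 n k = -(I1 n k * I2 n j) := by
  rw [I2, I1]; exact I_mul_I _ _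
lemma rIwIw : Iw n * Iw n = 0 := by rw [Iw]; exact I_sq _
lemma rI1I1 (j : Fin n) : I1 n j * I1 n j = 0 := by rw [I1]; exact I_sq _
lemma rI2I2 (j : Fin n) : I2 n j * I2 n j = 0 := by rw [I2]; exact I_sq _

end Infra3

set_option maxSynthPendingDepth 3
set_option synthInstance.maxHeartbeats 1000000
set_option maxHeartbeats 1000000

section AbstractComm
variable {R : Type*} [Ring R]

lemma tri' {α : Type*} [Semigroup α] {x y z : α} (h : x * y = z) (w : α) :
    x * (y * w) = z * w := by rw [← mul_assoc, h]

variable (e1 e2 iw i1 i2 s a : R)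
variable (has : a * s = s * a + 1)
variable (hae1 : a * e1 = e1 * a) (hae2 : a * e2 = e2 * a) (haiw : a * iw = iw * a)
variable (hai1 : a * i1 = i1 * a) (hai2 : a * i2 = i2 * a)
variable (hse1 : s * e1 = e1 * s) (hse2 : s * e2 = e2 * s) (hsiw : s * iw = iw * s)
variable (hsi1 : s * i1 = i1 * s) (hsi2 : s * i2 = i2 * s)
variable (hi1e1 : i1 * e1 = 1 - e1 * i1) (hi2e2 : i2 * e2 = 1 - e2 * i2)
variable (hi1e2 : i1 * e2 = -(e2 * i1)) (hi2e1 : i2 * e1 = -(e1 * i2))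
variable (hiwe1 : iw * e1 = -(e1 * iw)) (hiwe2 : iw * e2 = -(e2 * iw))
variable (hi1iw : i1 * iw = -(iw * i1)) (hi2iw : i2 * iw = -(iw * i2))
variable (he2e1 : e2 * e1 = -(e1 * e2)) (he1e1 : e1 * e1 = 0) (he2e2 : e2 * e2 = 0)

include has hae1 hae2 haiw hai1 hai2 hse1 hse2 hsiw hsi1 hsi2 hi1e1 hi2e2 hi1e2 hi2e1
  hiwe1 hiwe2 hi1iw hi2iw he2e1 he1e1 he2e2 in
lemma abstract_comm :
    ((s * a - e1 * i1 + e2 * i2) * (e1 * s) = (e1 * s) * (s * a - e1 * i1 + e2 * i2))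
    ∧ ((s * a - e1 * i1 + e2 * i2) * (e2 * a) = (e2 * a) * (s * a - e1 * i1 + e2 * i2))
    ∧ ((s * a - e1 * i1 + e2 * i2) * (e1 * (e2 * iw))
        = (e1 * (e2 * iw)) * (s * a - e1 * i1 + e2 * i2)) := by
  refine ⟨?_, ?_, ?_⟩ <;>
  · simp only [sub_mul, add_mul, mul_sub, mul_add, mul_assoc,
      tri' has, tri' hae1, tri' hae2, tri' haiw, tri' hai1, tri' hai2,
      tri' hse1, tri' hse2, tri' hsiw, tri' hsi1, tri' hsi2,
      tri' hi1e1, tri' hi2e2, tri' hi1e2, tri' hi2e1, tri' hiwe1, tri' hiwe2,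
      tri' hi1iw, tri' hi2iw, tri' he2e1, tri' he1e1, tri' he2e2,
      has, hae1, hae2, haiw, hai1, hai2, hse1, hse2, hsiw, hsi1, hsi2,
      hi1e1, hi2e2, hi1e2, hi2e1, hiwe1, hiwe2, hi1iw, hi2iw, he2e1, he1e1, he2e2,
      mul_one, one_mul, mul_zero, zero_mul, mul_neg, neg_mul, neg_neg]
    abel

end AbstractComm

section Infra4
variable {n : ℕ}

lemma I_mul_E_zero (f : Module.Dual ℂ (Vc n)) (v : Vc n) (hfv : f v = 0) :
    onL n (iMulF n f) * onL n (eMulV n v) = -(onL n (eMulV n v) * onL n (iMulF n f)) := by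
  rw [I_mul_E, hfv, zero_smul]
  exact zero_sub (G := Module.End ℂ (PL n)) _

lemma pairEI_comm_E (u v : Vc n) (f : Module.Dual ℂ (Vc n)) (hfv : f v = 0) :
    Commute (onL n (eMulV n u) * onL n (iMulF n f)) (onL n (eMulV n v)) := by
  have h1 : (onL n (eMulV n u) * onL n (iMulF n f)) * onL n (eMulV n v)
      = -(onL n (eMulV n u) * onL n (eMulV n v) * onL n (iMulF n f)) := by
    rw [mul_assoc, I_mul_E_zero f v hfv, mul_neg, mul_assoc]
  have h2 : onL n (eMulV n v) * (onL n (eMulV n u) * onL n (iMulF n f))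
      = -(onL n (eMulV n u) * onL n (eMulV n v) * onL n (iMulF n f)) := by
    rw [← mul_assoc, E_mul_E v u, neg_mul]
  show _ * _ = _ * _
  rw [h1, h2]

lemma pairEI_comm_I (u : Vc n) (f g : Module.Dual ℂ (Vc n)) (hgu : g u = 0) :
    Commute (onL n (eMulV n u) * onL n (iMulF n f)) (onL n (iMulF n g)) := by
  have h2 : onL n (iMulF n g) * (onL n (eMulV n u) * onL n (iMulF n f))
      = onL n (eMulV n u) * (onL n (iMulF n f) * onL n (iMulF n g)) := by
    rw [← mul_assoc, I_mul_E_zero g u hgu, neg_mul, mul_assoc, I_mul_I g f, mul_neg,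
      neg_neg]
  show _ * _ = _ * _
  rw [h2, mul_assoc]

lemma Udiag_mul (j : Fin n) :
    Udiag n j = Astar n j * A n j - E1 n j * I1 n j + E2 n j * I2 n j := rfl

lemma dualf_tau_zero_11 {j k : Fin n} (h : j ≠ k) :
    dualf n (idx1 n j) (tau n (idx1 n k)) = 0 := by
  rw [dualf_tau, if_neg (fun hh => h (idx1_inj hh))]
lemma dualf_tau_zero_22 {j k : Fin n} (h : j ≠ k) :
    dualf n (idx2 n j) (tau n (idx2 n k)) = 0 := by
  rw [dualf_tau, if_neg (fun hh => h (idx2_inj hh))]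
lemma dualf_tau_zero_12 (j k : Fin n) : dualf n (idx1 n j) (tau n (idx2 n k)) = 0 := by
  rw [dualf_tau, if_neg (idx1_ne_idx2 j k)]
lemma dualf_tau_zero_21 (j k : Fin n) : dualf n (idx2 n j) (tau n (idx1 n k)) = 0 := by
  rw [dualf_tau, if_neg (fun hh => idx1_ne_idx2 k j hh.symm)]
lemma dualf_tau_zero_1w (j : Fin n) : dualf n (idx1 n j) (tau n (idxw n)) = 0 := by
  rw [dualf_tau, if_neg (idx1_ne_idxw j)]
lemma dualf_tau_zero_2w (j : Fin n) : dualf n (idx2 n j) (tau n (idxw n)) = 0 := by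
  rw [dualf_tau, if_neg (idx2_ne_idxw j)]
lemma dualf_tau_zero_w1 (j : Fin n) : dualf n (idxw n) (tau n (idx1 n j)) = 0 := by
  rw [dualf_tau, if_neg (fun hh => idx1_ne_idxw j hh.symm)]
lemma dualf_tau_zero_w2 (j : Fin n) : dualf n (idxw n) (tau n (idx2 n j)) = 0 := by
  rw [dualf_tau, if_neg (fun hh => idx2_ne_idxw j hh.symm)]

-- `Udiag j` commutes with each atom of index `k ≠ j`, and with `Ew`, `Iw`.
lemma U_comm_E1 {j k : Fin n} (h : j ≠ k) : Commute (Udiag n j) (E1 n k) := by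
  rw [Udiag_mul]
  have h1 : Commute (Astar n j * A n j) (E1 n k) :=
    Commute.mul_left (cSE1 j k) (cAE1 j k)
  have h2 : Commute (E1 n j * I1 n j) (E1 n k) :=
    pairEI_comm_E _ _ _ (dualf_tau_zero_11 h)
  have h3 : Commute (E2 n j * I2 n j) (E1 n k) :=
    pairEI_comm_E _ _ _ (dualf_tau_zero_21 j k)
  exact (h1.sub_left h2).add_left h3

lemma U_comm_E2 {j k : Fin n} (h : j ≠ k) : Commute (Udiag n j) (E2 n k) := by
  rw [Udiag_mul]
  have h1 : Commute (Astar n j * A n j) (E2 n k) :=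
    Commute.mul_left (cSE2 j k) (cAE2 j k)
  have h2 : Commute (E1 n j * I1 n j) (E2 n k) :=
    pairEI_comm_E _ _ _ (dualf_tau_zero_12 j k)
  have h3 : Commute (E2 n j * I2 n j) (E2 n k) :=
    pairEI_comm_E _ _ _ (dualf_tau_zero_22 h)
  exact (h1.sub_left h2).add_left h3

lemma U_comm_Ew (j : Fin n) : Commute (Udiag n j) (Ew n) := by
  rw [Udiag_mul]
  have h1 : Commute (Astar n j * A n j) (Ew n) :=
    Commute.mul_left (cSEw j) (cAEw j)
  have h2 : Commute (E1 n j * I1 n j) (Ew n) :=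
    pairEI_comm_E _ _ _ (dualf_tau_zero_1w j)
  have h3 : Commute (E2 n j * I2 n j) (Ew n) :=
    pairEI_comm_E _ _ _ (dualf_tau_zero_2w j)
  exact (h1.sub_left h2).add_left h3

lemma U_comm_Iw (j : Fin n) : Commute (Udiag n j) (Iw n) := by
  rw [Udiag_mul]
  have h1 : Commute (Astar n j * A n j) (Iw n) :=
    Commute.mul_left (cSIw j) (cAIw j)
  have h2 : Commute (E1 n j * I1 n j) (Iw n) :=
    pairEI_comm_I _ _ _ (dualf_tau_zero_w1 j)
  have h3 : Commute (E2 n j * I2 n j) (Iw n) :=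
    pairEI_comm_I _ _ _ (dualf_tau_zero_w2 j)
  exact (h1.sub_left h2).add_left h3

lemma U_comm_A {j k : Fin n} (h : j ≠ k) : Commute (Udiag n j) (A n k) := by
  rw [Udiag_mul]
  have h1 : Commute (Astar n j * A n j) (A n k) :=
    Commute.mul_left ((a_mul_aStar_ne (Ne.symm h)).symm) (a_mul_a j k)
  have h2 : Commute (E1 n j * I1 n j) (A n k) :=
    Commute.mul_left ((cAE1 k j).symm) ((cAI1 k j).symm)
  have h3 : Commute (E2 n j * I2 n j) (A n k) :=
    Commute.mul_left ((cAE2 k j).symm) ((cAI2 k j).symm)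
  exact (h1.sub_left h2).add_left h3

lemma U_comm_Astar {j k : Fin n} (h : j ≠ k) : Commute (Udiag n j) (Astar n k) := by
  rw [Udiag_mul]
  have h1 : Commute (Astar n j * A n j) (Astar n k) :=
    Commute.mul_left (aStar_mul_aStar j k) (a_mul_aStar_ne h)
  have h2 : Commute (E1 n j * I1 n j) (Astar n k) :=
    Commute.mul_left ((cSE1 k j).symm) ((cSI1 k j).symm)
  have h3 : Commute (E2 n j * I2 n j) (Astar n k) :=
    Commute.mul_left ((cSE2 k j).symm) ((cSI2 k j).symm)
  exact (h1.sub_left h2).add_left h3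

lemma U_comm_monos (j : Fin n) :
    Commute (Udiag n j) (E1 n j * Astar n j)
    ∧ Commute (Udiag n j) (E2 n j * A n j)
    ∧ Commute (Udiag n j) (E1 n j * (E2 n j * Iw n)) := by
  have h := abstract_comm (E1 n j) (E2 n j) (Iw n) (I1 n j) (I2 n j) (Astar n j) (A n j)
    (a_mul_aStar_same j) (cAE1 j j) (cAE2 j j) (cAIw j) (cAI1 j j) (cAI2 j j)
    (cSE1 j j) (cSE2 j j) (cSIw j) (cSI1 j j) (cSI2 j j)
    (rI1E1_same j) (rI2E2_same j) (rI1E2 j j) (rI2E1 j j) (rIwE1 j) (rIwE2 j)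
    (rI1Iw j) (rI2Iw j) (rE2E1 j j) (rE1E1 j) (rE2E2 j)
  rw [Udiag_mul]
  exact h

lemma U_comm_mono1 (j k : Fin n) : Commute (Udiag n j) (E1 n k * Astar n k) := by
  rcases eq_or_ne j k with rfl | h
  · exact (U_comm_monos j).1
  · exact (U_comm_E1 h).mul_right (U_comm_Astar h)

lemma U_comm_mono2 (j k : Fin n) : Commute (Udiag n j) (E2 n k * A n k) := by
  rcases eq_or_ne j k with rfl | h
  · exact (U_comm_monos j).2.1
  · exact (U_comm_E2 h).mul_right (U_comm_A h)

lemma U_comm_mono3 (j k : Fin n) : Commute (Udiag n j) (E1 n k * (E2 n k * Iw n)) := by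
  rcases eq_or_ne j k with rfl | h
  · exact (U_comm_monos j).2.2
  · exact (U_comm_E1 h).mul_right ((U_comm_E2 h).mul_right (U_comm_Iw j))

lemma theta_mul (t : ℝ) (k : Fin n) :
    theta n t k = (-(Complex.I * (Real.sqrt t : ℝ))) • (E1 n k * Astar n k + E2 n k * A n k)
      - Complex.I • (E1 n k * (E2 n k * Iw n)) := rfl

lemma U_comm_theta (t : ℝ) (j k : Fin n) : Commute (Udiag n j) (theta n t k) := by
  rw [theta_mul]
  exact Commute.sub_right
    (Commute.smul_right ((U_comm_mono1 j k).add_right (U_comm_mono2 j k)) _)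
    (Commute.smul_right (U_comm_mono3 j k) _)

lemma dOp_mul (t : ℝ) :
    dOp n t = (∑ j : Fin n, theta n t j) - (Complex.I * (t : ℝ)) • Ew n := rfl

lemma U_comm_dOp (t : ℝ) (j : Fin n) : Commute (Udiag n j) (dOp n t) := by
  rw [dOp_mul]
  exact Commute.sub_right
    (Commute.sum_right _ _ _ (fun k _ => U_comm_theta t j k))
    (Commute.smul_right (U_comm_Ew j) _)

lemma dOp_comp_Udiag (t : ℝ) (j : Fin n) :
    dOp n t ∘ₗ Udiag n j = Udiag n j ∘ₗ dOp n t :=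
  ((U_comm_dOp t j).symm).eq

end Infra4

section Grading
variable {n : ℕ}

lemma lamP_e {p : ℕ} (v : Vc n) {x : Lam n} (hx : x ∈ LamP n p) :
    eMulV n v x ∈ LamP n (p + 1) := by
  show ExteriorAlgebra.ι ℂ v * x ∈ LamP n (p + 1)
  rw [LamP, pow_succ']
  exact Submodule.mul_mem_mul (LinearMap.mem_range_self _ v) hx

lemma lamP_i_zero (f : Module.Dual ℂ (Vc n)) {x : Lam n} (hx : x ∈ LamP n 0) :
    iMulF n f x = 0 := by
  rw [LamP, pow_zero] at hx
  obtain ⟨r, rfl⟩ := Submodule.mem_one.mp hx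
  exact CliffordAlgebra.contractLeft_algebraMap _ _ _

lemma lamP_i {p : ℕ} (f : Module.Dual ℂ (Vc n)) {x : Lam n} (hx : x ∈ LamP n (p + 1)) :
    iMulF n f x ∈ LamP n p := by
  induction p generalizing x with
  | zero =>
    rw [LamP, pow_one] at hx
    obtain ⟨v, rfl⟩ := hx
    have h1 : iMulF n f (ExteriorAlgebra.ι ℂ v) = algebraMap ℂ (Lam n) (f v) :=
      CliffordAlgebra.contractLeft_ι _ _ _
    rw [h1, LamP, pow_zero]
    exact Submodule.mem_one.mpr ⟨f v, rfl⟩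
  | succ q ih =>
    rw [LamP, pow_succ'] at hx
    refine Submodule.mul_induction_on hx ?_ ?_
    · rintro m ⟨v, rfl⟩ y hy
      have h1 : iMulF n f (ExteriorAlgebra.ι ℂ v * y)
          = f v • y - ExteriorAlgebra.ι ℂ v * iMulF n f y :=
        CliffordAlgebra.contractLeft_ι_mul _ _ _
      rw [h1]
      refine sub_mem (Submodule.smul_mem _ _ hy) ?_
      have h2 : iMulF n f y ∈ LamP n q := ih hy
      show _ ∈ LamP n (q + 1)
      rw [LamP, pow_succ']
      exact Submodule.mul_mem_mul (LinearMap.mem_range_self _ v) h2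
    · intro x y hx hy
      rw [map_add]
      exact add_mem hx hy

lemma Wp_map {p q : ℕ} (f : P n →ₗ[ℂ] P n) (g : Lam n →ₗ[ℂ] Lam n)
    (hg : ∀ x ∈ LamP n p, g x ∈ LamP n q) {v : PL n} (hv : v ∈ Wp n p) :
    (TensorProduct.map f g) v ∈ Wp n q := by
  obtain ⟨w, rfl⟩ := hv
  have hcomp : TensorProduct.map f g ∘ₗ
        TensorProduct.map (LinearMap.id : P n →ₗ[ℂ] P n) (LamP n p).subtype
      = TensorProduct.map (LinearMap.id : P n →ₗ[ℂ] P n) (LamP n q).subtype ∘ₗ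
        TensorProduct.map f (g.restrict hg) := by
    rw [← TensorProduct.map_comp, ← TensorProduct.map_comp, LinearMap.comp_id,
      LinearMap.id_comp, LinearMap.subtype_comp_restrict]
    rfl
  rw [← LinearMap.comp_apply, hcomp, LinearMap.comp_apply]
  exact LinearMap.mem_range_self _ _

lemma Wp_A (j : Fin n) {p : ℕ} {v : PL n} (hv : v ∈ Wp n p) : A n j v ∈ Wp n p :=
  Wp_map (aOp n j) LinearMap.id (fun _ hx => hx) hv

lemma Wp_Astar (j : Fin n) {p : ℕ} {v : PL n} (hv : v ∈ Wp n p) : Astar n j v ∈ Wp n p :=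
  Wp_map (aStarOp n j) LinearMap.id (fun _ hx => hx) hv

lemma Wp_E1 (j : Fin n) {p : ℕ} {v : PL n} (hv : v ∈ Wp n p) : E1 n j v ∈ Wp n (p + 1) :=
  Wp_map LinearMap.id _ (fun _ hx => lamP_e _ hx) hv

lemma Wp_E2 (j : Fin n) {p : ℕ} {v : PL n} (hv : v ∈ Wp n p) : E2 n j v ∈ Wp n (p + 1) :=
  Wp_map LinearMap.id _ (fun _ hx => lamP_e _ hx) hv

lemma Wp_Ew {p : ℕ} {v : PL n} (hv : v ∈ Wp n p) : Ew n v ∈ Wp n (p + 1) :=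
  Wp_map LinearMap.id _ (fun _ hx => lamP_e _ hx) hv

lemma Wp_Iw {p : ℕ} {v : PL n} (hv : v ∈ Wp n (p + 1)) : Iw n v ∈ Wp n p :=
  Wp_map LinearMap.id _ (fun _ hx => lamP_i _ hx) hv

lemma Wp_Iw_zero {v : PL n} (hv : v ∈ Wp n 0) : Iw n v = 0 := by
  obtain ⟨w, rfl⟩ := hv
  show (LinearMap.lTensor (P n) (iMulF n (dualf n (idxw n))))
      (TensorProduct.map LinearMap.id (LamP n 0).subtype w) = 0
  induction w using TensorProduct.induction_on with
  | zero => simp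
  | tmul a b =>
    rw [TensorProduct.map_tmul, LinearMap.lTensor_tmul]
    have h0 : (iMulF n (dualf n (idxw n))) ((LamP n 0).subtype b) = 0 :=
      lamP_i_zero _ b.2
    rw [h0, TensorProduct.tmul_zero]
  | add x y hx hy =>
    rw [map_add, map_add, hx, hy, add_zero]

lemma theta_Wp (t : ℝ) (k : Fin n) {p : ℕ} {v : PL n} (hv : v ∈ Wp n p) :
    theta n t k v ∈ Wp n (p + 1) := by
  rw [theta_mul]
  rw [LinearMap.sub_apply, LinearMap.smul_apply, LinearMap.smul_apply, LinearMap.add_apply]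
  refine sub_mem (Submodule.smul_mem _ _ (add_mem ?_ ?_)) (Submodule.smul_mem _ _ ?_)
  · exact Wp_E1 k (Wp_Astar k hv)
  · exact Wp_E2 k (Wp_A k hv)
  · show E1 n k ((E2 n k) ((Iw n) v)) ∈ Wp n (p + 1)
    cases p with
    | zero =>
      rw [Wp_Iw_zero hv, map_zero, map_zero]
      exact zero_mem _
    | succ q =>
      exact Wp_E1 k (Wp_E2 k (Wp_Iw hv))

lemma dOp_Wp (t : ℝ) {p : ℕ} {v : PL n} (hv : v ∈ Wp n p) : dOp n t v ∈ Wp n (p + 1) := by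
  rw [dOp_mul, LinearMap.sub_apply, LinearMap.smul_apply, LinearMap.sum_apply]
  refine sub_mem (Submodule.sum_mem _ fun k _ => theta_Wp t k hv)
    (Submodule.smul_mem _ _ (Wp_Ew hv))

end Grading

/-- For every `t > 0` and every `j`, the operators `d(t)` and `U_{jj}` on `P_n ⊗ Λ` commute;
consequently `d(t)` maps `V^{p,n,γ}` into `V^{p+1,n,γ}` for every `γ ∈ ℤ^n` and `0 ≤ p ≤ 2n`. -/
theorem dOp_commutes_with_Udiag (n : ℕ) (hn : 1 ≤ n) :
    (∀ t : ℝ, 0 < t → ∀ j : Fin n, dOp n t ∘ₗ Udiag n j = Udiag n j ∘ₗ dOp n t) ∧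
    (∀ t : ℝ, 0 < t → ∀ p : ℕ, p ≤ 2 * n → ∀ γ : Fin n → ℤ,
      ∀ v ∈ Vpγ n p γ, dOp n t v ∈ Vpγ n (p + 1) γ) := by
  constructor
  · intro t _ j
    exact dOp_comp_Udiag t j
  · intro t ht p hp γ v hv
    rw [Vpγ, Submodule.mem_inf] at hv ⊢
    obtain ⟨hw, he⟩ := hv
    refine ⟨dOp_Wp t hw, ?_⟩
    rw [Submodule.mem_iInf] at he ⊢
    intro j
    have hj := he j
    rw [Module.End.mem_eigenspace_iff] at hj ⊢
    have hc := LinearMap.congr_fun (dOp_comp_Udiag (n := n) t j) v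
    rw [LinearMap.comp_apply, LinearMap.comp_apply] at hc
    rw [← hc, hj, map_smul]

end HeisenbergModel
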